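/- For each k ∈ {0,1,...,N}, the CDF of the Cantor measure satisfies F(k/N) = g(k)/|D|, where g(k) is the number of elements of D strictly less than k. -/

import Mathlib

open MeasureTheory Set
open scoped ENNReal

theorem cantor_cdf_at_k_div_N
    (N : ℕ) (hN : 3 ≤ N) (D : Finset ℕ) (hD : D ⊆ Finset.range N)
    (hcard : 2 ≤ D.card) (hcard' : D.card ≤ N - 1)
    (μ : Measure ℝ) [IsProbabilityMeasure μ]
    (hsupp : μ (Set.Icc 0 1) = 1)
    (hinv : μ = (D.card : ℝ≥0∞)⁻¹ • ∑ d ∈ D, μ.map (fun x : ℝ => (x + (d : ℝ)) / N)) :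
    ∀ k ≤ N,
      (μ (Set.Icc 0 ((k : ℝ) / N))).toReal
        = ((D.filter (fun d => d < k)).card : ℝ) / (D.card : ℝ) := by
  have hN0 : (0:ℝ) < N := by positivity
  have hmeas : ∀ d : ℕ, Measurable (fun x : ℝ => (x + (d : ℝ)) / N) :=
    fun d => (measurable_id.add_const _).div_const _
  have hcompl : μ (Set.Icc (0:ℝ) 1)ᶜ = 0 := by
    rw [measure_compl (measurableSet_Icc (a := (0:ℝ)) (b := 1)) (measure_ne_top μ _),
      hsupp, measure_univ, tsub_self]
  have hrestr : ∀ s : Set ℝ, μ s = μ (s ∩ Set.Icc 0 1) :=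
    fun s => (measure_inter_conull hcompl).symm
  -- μ {0} = 0
  have hzero : μ ({0} : Set ℝ) = 0 := by
    have hpre : ∀ d : ℕ, (fun x : ℝ => (x + (d : ℝ)) / N) ⁻¹' {0} = {-(d:ℝ)} := by
      intro d
      ext x
      simp only [mem_preimage, mem_singleton_iff]
      rw [div_eq_zero_iff]
      constructor
      · rintro (h | h)
        · linarith
        · exact absurd h (ne_of_gt hN0)
      · intro h; left; rw [h]; ring
    have hterm : ∀ d ∈ D, μ.map (fun x : ℝ => (x + (d : ℝ)) / N) {0}
        = if d = 0 then μ ({0} : Set ℝ) else 0 := by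
      intro d _
      rw [Measure.map_apply (hmeas d) (measurableSet_singleton 0), hpre d]
      rcases Nat.eq_zero_or_pos d with h0 | h0
      · subst h0; simp
      · have hd : (0:ℝ) < d := by exact_mod_cast h0
        have hemp : ({-(d:ℝ)} : Set ℝ) ∩ Set.Icc 0 1 = ∅ := by
          ext x
          simp only [mem_inter_iff, mem_singleton_iff, mem_Icc, mem_empty_iff_false,
            iff_false, not_and]
          intro hx h1
          subst hx
          intro h2
          linarith
        rw [hrestr ({-(d:ℝ)} : Set ℝ), hemp, measure_empty, if_neg (by omega)]
    have hsum : ∑ d ∈ D, μ.map (fun x : ℝ => (x + (d : ℝ)) / N) {0}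
        ≤ μ ({0} : Set ℝ) := by
      rw [Finset.sum_congr rfl hterm, Finset.sum_ite_eq' D 0 (fun _ => μ ({0} : Set ℝ))]
      split_ifs
      · exact le_rfl
      · exact zero_le
    have hle : μ ({0} : Set ℝ) ≤ 2⁻¹ * μ ({0} : Set ℝ) := by
      conv_lhs => rw [hinv]
      simp only [Measure.smul_apply, Measure.coe_finset_sum, Finset.sum_apply,
        smul_eq_mul]
      exact mul_le_mul' (ENNReal.inv_le_inv.mpr (by exact_mod_cast hcard)) hsum
    by_contra hne
    have h2 : μ ({0} : Set ℝ) / 2 < μ ({0} : Set ℝ) :=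
      ENNReal.half_lt_self hne (measure_ne_top μ _)
    rw [ENNReal.div_eq_inv_mul] at h2
    exact absurd hle (not_le.mpr h2)
  intro k hk
  have hpreI : ∀ d : ℕ, (fun x : ℝ => (x + (d : ℝ)) / N) ⁻¹' Set.Icc 0 ((k:ℝ)/N)
      = Set.Icc (-(d:ℝ)) ((k:ℝ) - d) := by
    intro d
    ext x
    simp only [mem_preimage, mem_Icc]
    rw [le_div_iff₀ hN0, zero_mul, div_le_div_iff_of_pos_right hN0]
    constructor <;> intro h <;> exact ⟨by linarith [h.1], by linarith [h.2]⟩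
  have hterm : ∀ d ∈ D, μ.map (fun x : ℝ => (x + (d : ℝ)) / N) (Set.Icc 0 ((k:ℝ)/N))
      = if d < k then 1 else 0 := by
    intro d _
    rw [Measure.map_apply (hmeas d) measurableSet_Icc, hpreI d]
    split_ifs with h
    · have hdk : (d:ℝ) + 1 ≤ k := by exact_mod_cast h
      refine le_antisymm prob_le_one ?_
      rw [← hsupp]
      apply measure_mono
      intro x hx
      simp only [mem_Icc] at hx ⊢
      exact ⟨by linarith [hx.1], by linarith [hx.2]⟩
    · have hdk : (k:ℝ) ≤ d := by exact_mod_cast not_lt.mp h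
      rw [hrestr (Set.Icc (-(d:ℝ)) ((k:ℝ) - d))]
      have hsub : Set.Icc (-(d:ℝ)) ((k:ℝ) - d) ∩ Set.Icc 0 1 ⊆ {0} := by
        intro x hx
        simp only [mem_inter_iff, mem_Icc, mem_singleton_iff] at hx ⊢
        linarith [hx.1.2, hx.2.1]
      exact le_antisymm (le_trans (measure_mono hsub) (le_of_eq hzero)) zero_le
  conv_lhs => rw [hinv]
  simp only [Measure.smul_apply, Measure.coe_finset_sum, Finset.sum_apply, smul_eq_mul]
  rw [Finset.sum_congr rfl hterm, Finset.sum_ite, Finset.sum_const, Finset.sum_const]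
  simp only [nsmul_eq_mul, mul_one, mul_zero, add_zero]
  rw [ENNReal.toReal_mul]
  simp only [ENNReal.toReal_inv, ENNReal.toReal_natCast]
  rw [inv_mul_eq_div]
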